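/- Let g: ℂ → ℝ be a nonnegative function with g(z) → ∞ as |z| → ∞. Let (α_n) be a sequence of algebraic numbers and μ_n the uniform probability measure on the set of conjugates of α_n. If the heights h_g(α_n) := (1/deg α_n)(log|b_n| + ∑_{x ∈ Conj(α_n)} g(x)) are bounded above and the leading coefficients satisfy |b_n| ≥ 1, then the family (μ_n) is tight: for every ε > 0 there is a compact K ⊂ ℂ with μ_n(ℂ \ K) < ε for all n. -/

import Mathlib

open Polynomial MeasureTheory

noncomputable def heightWrt (g : ℂ → ℝ) (P : Polynomial ℤ) : ℝ :=
  (1 / (P.natDegree : ℝ)) *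
    (Real.log |(P.leadingCoeff : ℝ)| + (((P.map (Int.castRingHom ℂ)).roots.map g).sum))

noncomputable def conjMeasure (P : Polynomial ℤ) : Measure ℂ :=
  ((P.natDegree : ENNReal))⁻¹ •
    (((P.map (Int.castRingHom ℂ)).roots.map (fun x => Measure.dirac x)).sum)

open scoped Classical in
lemma multiset_dirac_sum_apply (s : Multiset ℂ) (A : Set ℂ) (hA : MeasurableSet A) :
    ((s.map (fun x => Measure.dirac x)).sum) A = ((s.filter (fun x => x ∈ A)).card : ENNReal) := by
  classical
  induction s using Multiset.induction with
  | empty => simp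
  | cons a s ih =>
    rw [Multiset.map_cons, Multiset.sum_cons, Measure.add_apply, ih,
      Measure.dirac_apply' _ hA, Multiset.filter_cons]
    by_cases h : a ∈ A <;> simp [h, add_comm]

/-- If `g ≥ 0` with `g(z) → ∞` as `|z| → ∞`, the heights `h_g(α_n)` are bounded above
and the leading coefficients satisfy `|b_n| ≥ 1`, then the family of uniform measures on
conjugates is tight. -/
theorem conjMeasures_tight (g : ℂ → ℝ) (hg0 : ∀ z, 0 ≤ g z)
    (hginf : ∀ M : ℝ, ∃ R : ℝ, ∀ z : ℂ, R ≤ ‖z‖ → M ≤ g z)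
    (P : ℕ → Polynomial ℤ) (hirr : ∀ n, Irreducible (P n))
    (hdeg : ∀ n, 0 < (P n).natDegree)
    (hlead : ∀ n, 1 ≤ |(P n).leadingCoeff|)
    (hbdd : ∃ B : ℝ, ∀ n, heightWrt g (P n) ≤ B) :
    ∀ ε : ℝ, 0 < ε → ∃ K : Set ℂ, IsCompact K ∧
      ∀ n, conjMeasure (P n) Kᶜ < ENNReal.ofReal ε := by
  classical
  obtain ⟨B, hB⟩ := hbdd
  intro ε hε
  set B' : ℝ := max B 0 with hB'
  set M : ℝ := (B' + 1) / ε with hM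
  have hB'0 : 0 ≤ B' := le_max_right _ _
  have hMpos : 0 < M := by positivity
  obtain ⟨R, hR⟩ := hginf M
  refine ⟨Metric.closedBall 0 R, isCompact_closedBall 0 R, fun n => ?_⟩
  set Q : Polynomial ℂ := (P n).map (Int.castRingHom ℂ) with hQ
  set s : Multiset ℂ := Q.roots with hs
  set d : ℕ := (P n).natDegree with hd
  have hdpos : 0 < d := hdeg n
  have hPne : (P n) ≠ 0 := (hirr n).ne_zero
  have hQne : Q ≠ 0 := by
    rw [hQ]
    exact (Polynomial.map_ne_zero_iff (f := Int.castRingHom ℂ) Int.cast_injective).mpr hPne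
  have hcard : s.card = d := by
    rw [hs, hd, ← Polynomial.natDegree_map_eq_of_injective
      (f := Int.castRingHom ℂ) Int.cast_injective (P n)]
    exact Polynomial.splits_iff_card_roots.mp (IsAlgClosed.splits Q)
  -- sum of g over roots bounded
  have hlog : 0 ≤ Real.log |((P n).leadingCoeff : ℝ)| := by
    apply Real.log_nonneg
    rw [← Int.cast_abs]
    exact_mod_cast hlead n
  have hsum : (s.map g).sum ≤ B' * d := by
    have h1 := hB n
    rw [heightWrt] at h1
    have hd' : (0:ℝ) < (d:ℝ) := by exact_mod_cast hdpos
    rw [one_div, inv_mul_le_iff₀ hd'] at h1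
    have : Real.log |((P n).leadingCoeff : ℝ)| + (s.map g).sum ≤ B * d := by
      rw [mul_comm] at h1; exact h1
    nlinarith [mul_le_mul_of_nonneg_right (le_max_left B 0) (le_of_lt hd')]
  set t : Multiset ℂ := s.filter (fun x => x ∈ (Metric.closedBall (0:ℂ) R)ᶜ) with ht
  have hgt : ∀ x ∈ t, M ≤ g x := by
    intro x hx
    have hx' := (Multiset.mem_filter.mp hx).2
    simp only [Set.mem_compl_iff, Metric.mem_closedBall, Complex.dist_eq, sub_zero, not_le] at hx'
    exact hR x hx'.le
  have htsum : (t.card : ℝ) * M ≤ (t.map g).sum := by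
    have := Multiset.card_nsmul_le_sum (s := t.map g) (a := M)
      (fun x hx => by obtain ⟨y, hy, rfl⟩ := Multiset.mem_map.mp hx; exact hgt y hy)
    rwa [Multiset.card_map, nsmul_eq_mul] at this
  have hts : (t.map g).sum ≤ (s.map g).sum := by
    have hsplit := Multiset.filter_add_not (fun x => x ∈ (Metric.closedBall (0:ℂ) R)ᶜ) s
    calc (t.map g).sum ≤ (t.map g).sum +
        ((s.filter (fun x => ¬ x ∈ (Metric.closedBall (0:ℂ) R)ᶜ)).map g).sum := by
          have : 0 ≤ ((s.filter (fun x => ¬ x ∈ (Metric.closedBall (0:ℂ) R)ᶜ)).map g).sum :=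
            Multiset.sum_nonneg (fun x hx => by
              obtain ⟨y, hy, rfl⟩ := Multiset.mem_map.mp hx; exact hg0 y)
          linarith
      _ = (s.map g).sum := by
          rw [← Multiset.sum_add, ← Multiset.map_add, ht, hsplit]
  have hcnt : (t.card : ℝ) < ε * d := by
    have h1 : (t.card : ℝ) * M ≤ B' * d := le_trans htsum (le_trans hts hsum)
    have hd' : (0:ℝ) < (d:ℝ) := by exact_mod_cast hdpos
    rw [hM] at h1
    have h2 : (t.card : ℝ) * (B' + 1) ≤ B' * d * ε := by
      calc (t.card : ℝ) * (B'+1) = (t.card : ℝ) * ((B'+1)/ε) * ε := by field_simp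
        _ ≤ B' * d * ε := mul_le_mul_of_nonneg_right h1 hε.le
    nlinarith [Nat.cast_nonneg (α := ℝ) t.card]
  -- ENNReal conclusion
  have hmeas : MeasurableSet ((Metric.closedBall (0:ℂ) R)ᶜ) :=
    Metric.isClosed_closedBall.measurableSet.compl
  have happ : conjMeasure (P n) (Metric.closedBall (0:ℂ) R)ᶜ =
      ((d : ENNReal))⁻¹ * (t.card : ENNReal) := by
    rw [conjMeasure, Measure.smul_apply, smul_eq_mul, ← hQ, ← hs, ← hd,
      multiset_dirac_sum_apply s _ hmeas]
    congr
  rw [happ]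
  have hdne : (d : ENNReal) ≠ 0 := by exact_mod_cast hdpos.ne'
  have hdnt : (d : ENNReal) ≠ ⊤ := ENNReal.natCast_ne_top d
  have hlt : (t.card : ENNReal) < ENNReal.ofReal ε * d := by
    have h2 : ENNReal.ofReal (t.card : ℝ) < ENNReal.ofReal (ε * d) :=
      (ENNReal.ofReal_lt_ofReal_iff (by positivity)).mpr hcnt
    rwa [ENNReal.ofReal_mul hε.le, ENNReal.ofReal_natCast, ENNReal.ofReal_natCast] at h2
  calc ((d : ENNReal))⁻¹ * (t.card : ENNReal)
      < ((d : ENNReal))⁻¹ * (ENNReal.ofReal ε * d) := by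
        rw [ENNReal.mul_lt_mul_iff_right (ENNReal.inv_ne_zero.mpr hdnt) (ENNReal.inv_ne_top.mpr hdne)]
        exact hlt
    _ = ENNReal.ofReal ε := by
        rw [mul_comm (ENNReal.ofReal ε) _, ← mul_assoc, ENNReal.inv_mul_cancel hdne hdnt, one_mul]
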